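/- There exists n₀ such that for all n ≥ n₀, all integers l ≥ θ_n/2, and all x, y ∈ V_n^{ev}, one has | (Q_n^{ev})^l(x,y) - 2^{-(n-1)} | ≤ 2^{-n}·2^{-(n-1)}; the same estimate holds with the odd chain Q_n^{od} on V_n^{od}. -/

import Mathlib

open Filter

/-- The vertex set of the `n`-dimensional discrete cube. -/
abbrev V (n : ℕ) := Fin n → Bool

/-- Vertices at even Hamming distance from `(1,…,1)`. -/
abbrev Vev (n : ℕ) := {x : V n // Even (hammingDist x (fun _ => true))}

/-- Vertices at odd Hamming distance from `(1,…,1)`. -/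
abbrev Vod (n : ℕ) := {x : V n // ¬ Even (hammingDist x (fun _ => true))}

/-- The two-step even chain: `2/n²` at Hamming distance 2, `1/n` on the diagonal. -/
noncomputable def Qev (n : ℕ) : Matrix (Vev n) (Vev n) ℝ :=
  fun x y => if hammingDist x.1 y.1 = 2 then 2 / (n : ℝ) ^ 2
    else if x = y then (n : ℝ)⁻¹ else 0

/-- The two-step odd chain: `2/n²` at Hamming distance 2, `1/n` on the diagonal. -/
noncomputable def Qod (n : ℕ) : Matrix (Vod n) (Vod n) ℝ :=
  fun x y => if hammingDist x.1 y.1 = 2 then 2 / (n : ℝ) ^ 2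
    else if x = y then (n : ℝ)⁻¹ else 0

/-- `θ_n = 2⌈(3/2)(n-1) log 2 / |log(1 - 2/n)|⌉`. -/
noncomputable def θ (n : ℕ) : ℕ :=
  2 * ⌈(3 / 2 : ℝ) * ((n : ℝ) - 1) * Real.log 2 / |Real.log (1 - 2 / (n : ℝ))|⌉₊

namespace EOC

open Finset

variable {n : ℕ}

/-- Flip coordinate `i`. -/
def flp (i : Fin n) (x : V n) : V n := Function.update x i (!(x i))

/-- Walsh character. -/
noncomputable def ee (S : Finset (Fin n)) (x y : V n) : ℝ :=
  ∏ i ∈ S, (if x i = y i then (1:ℝ) else -1)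

/-- Eigenvalue. -/
noncomputable def lam (n : ℕ) (S : Finset (Fin n)) : ℝ := ((n:ℝ) - 2*S.card)/n

/-- Spectral kernel. -/
noncomputable def KK (n m : ℕ) (x y : V n) : ℝ :=
  ((2:ℝ)^n)⁻¹ * ∑ S : Finset (Fin n), lam n S ^ m * ee S x y

/-- One step walk. -/
noncomputable def P1 (n : ℕ) : Matrix (V n) (V n) ℝ :=
  fun x y => if hammingDist x y = 1 then (n:ℝ)⁻¹ else 0

lemma flp_apply (i : Fin n) (x : V n) (j : Fin n) :
    flp i x j = if j = i then !(x i) else x j := Function.update_apply x i _ j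

lemma hd_eq (x y : V n) : hammingDist x y = #(univ.filter fun i => x i ≠ y i) := rfl

lemma dist_flp (i : Fin n) (x y : V n) :
    hammingDist (flp i x) y =
      if x i = y i then hammingDist x y + 1 else hammingDist x y - 1 := by
  rw [hd_eq, hd_eq]
  have hset : (univ.filter fun j => flp i x j ≠ y j)
      = if x i = y i then insert i (univ.filter fun j => x j ≠ y j)
        else (univ.filter fun j => x j ≠ y j).erase i := by
    ext j
    rcases eq_or_ne j i with rfl | hj
    · by_cases h : x j = y j <;>
        cases hx : x j <;> cases hy : y j <;>
        simp_all [flp_apply, mem_insert, mem_erase]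
    · by_cases h : x i = y i <;> simp [flp_apply, hj, h]
  rw [hset]
  by_cases h : x i = y i
  · rw [if_pos h, if_pos h, card_insert_of_notMem (by simp [h])]
  · rw [if_neg h, if_neg h, card_erase_of_mem (by simp [h])]

lemma sum_nbr (x : V n) (g : V n → ℝ) :
    (∑ z : V n, if hammingDist x z = 1 then g z else 0) = ∑ i : Fin n, g (flp i x) := by
  rw [← Finset.sum_filter]
  refine (Finset.sum_bij (fun (i : Fin n) (_ : i ∈ univ) => flp i x) ?_ ?_ ?_ ?_).symm
  · intro i _
    simp only [mem_filter, mem_univ, true_and]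
    rw [hammingDist_comm, dist_flp]
    simp
  · intro a _ b _ hab
    by_contra hne
    have h2 : flp a x b = flp b x b := congrFun hab b
    rw [flp_apply, flp_apply, if_neg (Ne.symm hne), if_pos rfl] at h2
    exact (x b).not_ne_self h2.symm
  · intro z hz
    replace hz : #(univ.filter fun i => x i ≠ z i) = 1 := (Finset.mem_filter.mp hz).2
    obtain ⟨a, ha⟩ := Finset.card_eq_one.mp hz
    refine ⟨a, mem_univ a, funext fun j => ?_⟩
    rcases eq_or_ne j a with rfl | hj
    · have hmem : j ∈ univ.filter fun i => x i ≠ z i := ha ▸ Finset.mem_singleton_self j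
      simp only [mem_filter, mem_univ, true_and] at hmem
      show flp j x j = z j
      rw [flp_apply, if_pos rfl]
      cases hx : x j <;> cases hzz : z j <;> simp_all
    · have hmem : j ∉ univ.filter fun i => x i ≠ z i := by
        rw [ha]; simp [hj]
      simp only [mem_filter, mem_univ, true_and, not_not] at hmem
      show flp a x j = z j
      rw [flp_apply, if_neg hj, hmem]
  · intro i _; rfl

lemma count_sum (hn : 0 < n) (x y : V n) :
    (∑ i : Fin n, if hammingDist (flp i x) y = 1 then (n:ℝ)⁻¹ else 0)
      = (if x = y then (n:ℝ) else if hammingDist x y = 2 then 2 else 0) * (n:ℝ)⁻¹ := by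
  by_cases hxy : x = y
  · subst hxy
    rw [if_pos rfl]
    have : ∀ i : Fin n, (if hammingDist (flp i x) x = 1 then (n:ℝ)⁻¹ else 0) = (n:ℝ)⁻¹ := by
      intro i
      rw [dist_flp, if_pos rfl, hammingDist_self, if_pos rfl]
    rw [Finset.sum_congr rfl fun i _ => this i, Finset.sum_const, card_univ, Fintype.card_fin,
      nsmul_eq_mul]
  · rw [if_neg hxy]
    have hd0 : hammingDist x y ≠ 0 := fun h0 => hxy (eq_of_hammingDist_eq_zero h0)
    by_cases h2 : hammingDist x y = 2
    · rw [if_pos h2]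
      have : ∀ i : Fin n, (if hammingDist (flp i x) y = 1 then (n:ℝ)⁻¹ else 0)
          = if ¬ (x i = y i) then (n:ℝ)⁻¹ else 0 := by
        intro i
        rw [dist_flp]
        by_cases h : x i = y i
        · rw [if_pos h, if_neg (by omega), if_neg (by simp [h])]
        · rw [if_neg h, if_pos (by omega), if_pos (by simp [h])]
      rw [Finset.sum_congr rfl fun i _ => this i, Finset.sum_ite, Finset.sum_const,
        Finset.sum_const, smul_zero, add_zero, nsmul_eq_mul]
      have hcard : (univ.filter fun i => ¬ (x i = y i)).card = 2 := by
        rw [← h2, hd_eq]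
      rw [hcard]; norm_num
    · rw [if_neg h2, zero_mul]
      refine Finset.sum_eq_zero fun i _ => ?_
      rw [dist_flp]
      by_cases h : x i = y i
      · rw [if_pos h, if_neg (by omega)]
      · rw [if_neg h, if_neg (by omega)]

lemma P1_sq (hn : 0 < n) (x y : V n) :
    (P1 n * P1 n) x y =
      if hammingDist x y = 2 then 2/(n:ℝ)^2 else if x = y then (n:ℝ)⁻¹ else 0 := by
  have hne : (n:ℝ) ≠ 0 := Nat.cast_ne_zero.mpr hn.ne'
  rw [Matrix.mul_apply]
  have h1 : ∀ z, P1 n x z * P1 n z y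
      = if hammingDist x z = 1 then ((if hammingDist (z) y = 1 then (n:ℝ)⁻¹ else 0) * (n:ℝ)⁻¹) else 0 := by
    intro z
    simp only [P1]
    by_cases h : hammingDist x z = 1 <;> simp [h, mul_comm]
  rw [Finset.sum_congr rfl fun z _ => h1 z,
    sum_nbr x (fun z => (if hammingDist z y = 1 then (n:ℝ)⁻¹ else 0) * (n:ℝ)⁻¹),
    ← Finset.sum_mul, count_sum hn x y]
  by_cases hxy : x = y
  · subst hxy
    rw [if_pos rfl, if_neg (by simp [hammingDist_self]), if_pos rfl]
    field_simp
  · rw [if_neg hxy]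
    by_cases h2 : hammingDist x y = 2
    · rw [if_pos h2, if_pos h2]
      field_simp
    · rw [if_neg h2, if_neg h2, if_neg hxy, zero_mul, zero_mul]

lemma ee_flp (S : Finset (Fin n)) (x y : V n) (i : Fin n) :
    ee S x (flp i y) = (if i ∈ S then -1 else 1) * ee S x y := by
  by_cases hi : i ∈ S
  · rw [if_pos hi]
    unfold ee
    rw [← Finset.mul_prod_erase S _ hi, ← Finset.mul_prod_erase S _ hi]
    have h1 : ∀ j ∈ S.erase i, (if x j = flp i y j then (1:ℝ) else -1)
        = (if x j = y j then (1:ℝ) else -1) := by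
      intro j hj
      rw [flp_apply, if_neg (Finset.ne_of_mem_erase hj)]
    rw [Finset.prod_congr rfl h1]
    have h2 : (if x i = flp i y i then (1:ℝ) else -1) = -(if x i = y i then (1:ℝ) else -1) := by
      rw [flp_apply, if_pos rfl]
      cases hx : x i <;> cases hy : y i <;> norm_num
    rw [h2]; ring
  · rw [if_neg hi, one_mul]
    unfold ee
    refine Finset.prod_congr rfl fun j hj => ?_
    have hji : j ≠ i := fun h => hi (h ▸ hj)
    rw [flp_apply, if_neg hji]

lemma sum_ee_flp (S : Finset (Fin n)) (x y : V n) :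
    (∑ i : Fin n, ee S x (flp i y)) = ((n:ℝ) - 2*S.card) * ee S x y := by
  rw [Finset.sum_congr rfl fun i _ => ee_flp S x y i, ← Finset.sum_mul]
  congr 1
  have h1 : ∀ i : Fin n, (if i ∈ S then (-1:ℝ) else 1)
      = 1 - 2 * (if i ∈ S then (1:ℝ) else 0) := by
    intro i; by_cases h : i ∈ S <;> simp [h] <;> norm_num
  rw [Finset.sum_congr rfl fun i _ => h1 i, Finset.sum_sub_distrib, ← Finset.mul_sum,
    Finset.sum_boole, Finset.sum_const, card_univ, Fintype.card_fin, nsmul_eq_mul, mul_one]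
  have : univ.filter (fun i => i ∈ S) = S := by ext j; simp
  rw [this]

lemma orth (x y : V n) :
    (∑ S : Finset (Fin n), ee S x y) = if x = y then (2:ℝ)^n else 0 := by
  have h := Finset.prod_add (fun i : Fin n => if x i = y i then (1:ℝ) else -1)
    (fun _ => (1:ℝ)) univ
  simp only [Finset.prod_const_one, mul_one, Finset.powerset_univ] at h
  have h2 : (∑ S : Finset (Fin n), ee S x y)
      = ∏ i : Fin n, ((if x i = y i then (1:ℝ) else -1) + 1) := by
    rw [h]; rfl
  rw [h2]
  by_cases hxy : x = y
  · subst hxy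
    rw [if_pos rfl]
    have hfac : ∀ i : Fin n, ((if x i = x i then (1:ℝ) else -1) + 1) = 2 := by
      intro i; rw [if_pos rfl]; norm_num
    rw [Finset.prod_congr rfl fun i _ => hfac i, Finset.prod_const, card_univ, Fintype.card_fin]
  · rw [if_neg hxy]
    obtain ⟨i, hi⟩ := Function.ne_iff.mp hxy
    refine Finset.prod_eq_zero (mem_univ i) ?_
    rw [if_neg hi]
    ring

lemma spectral (hn : 0 < n) (m : ℕ) (x y : V n) : (P1 n ^ m) x y = KK n m x y := by
  have hne : (n:ℝ) ≠ 0 := Nat.cast_ne_zero.mpr hn.ne'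
  induction m generalizing x y with
  | zero =>
    rw [pow_zero, Matrix.one_apply]
    unfold KK
    simp only [pow_zero, one_mul]
    rw [orth]
    by_cases hxy : x = y
    · rw [if_pos hxy, if_pos hxy, inv_mul_cancel₀ (by positivity)]
    · rw [if_neg hxy, if_neg hxy, mul_zero]
  | succ m ih =>
    rw [pow_succ, Matrix.mul_apply]
    have h1 : ∀ z, (P1 n ^ m) x z * P1 n z y
        = if hammingDist y z = 1 then KK n m x z * (n:ℝ)⁻¹ else 0 := by
      intro z
      rw [ih x z]
      simp only [P1, hammingDist_comm z y]
      by_cases h : hammingDist y z = 1 <;> simp [h]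
    rw [Finset.sum_congr rfl fun z _ => h1 z, sum_nbr y (fun z => KK n m x z * (n:ℝ)⁻¹)]
    have per : ∀ S : Finset (Fin n), (∑ i : Fin n, lam n S ^ m * ee S x (flp i y)) * (n:ℝ)⁻¹
        = lam n S ^ (m+1) * ee S x y := by
      intro S
      rw [← Finset.mul_sum, sum_ee_flp]
      have hh : lam n S ^ (m+1) = lam n S ^ m * (((n:ℝ) - 2*S.card) * (n:ℝ)⁻¹) := by
        rw [pow_succ]; unfold lam; rw [div_eq_mul_inv]
      rw [hh]; ring
    have h2 : (∑ i : Fin n, KK n m x (flp i y) * (n:ℝ)⁻¹)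
        = ((2:ℝ)^n)⁻¹ * ∑ S : Finset (Fin n), lam n S ^ (m+1) * ee S x y := by
      unfold KK
      rw [← Finset.sum_mul, ← Finset.mul_sum, mul_assoc, Finset.sum_comm, Finset.sum_mul,
        Finset.sum_congr rfl fun S _ => per S]
    exact h2.trans rfl

lemma dist_parity (x y z : V n) :
    hammingDist x z % 2 = (hammingDist x y + hammingDist y z) % 2 := by
  have key : ((hammingDist x z : ℕ) : ZMod 2)
      = ((hammingDist x y + hammingDist y z : ℕ) : ZMod 2) := by
    rw [hd_eq, hd_eq, hd_eq, Finset.card_filter, Finset.card_filter, Finset.card_filter]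
    push_cast
    rw [← Finset.sum_add_distrib]
    refine Finset.sum_congr rfl fun i _ => ?_
    cases hx : x i <;> cases hy : y i <;> cases hz : z i <;> simp <;> decide
  exact (ZMod.natCast_eq_natCast_iff _ _ _).mp key

/-- generic chain on a parity class -/
noncomputable def Qgen (n : ℕ) (p : V n → Prop) [DecidablePred p] :
    Matrix {x : V n // p x} {x : V n // p x} ℝ :=
  fun x y => if hammingDist x.1 y.1 = 2 then 2 / (n : ℝ) ^ 2
    else if x = y then (n : ℝ)⁻¹ else 0

lemma Qgen_pow (hn : 0 < n) (p : V n → Prop) [DecidablePred p]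
    (hcross : ∀ z y : V n, ¬ p z → p y → ¬ Even (hammingDist z y))
    (l : ℕ) (x y : {x : V n // p x}) :
    (Qgen n p ^ l) x y = KK n (2*l) x.1 y.1 := by
  induction l generalizing x y with
  | zero =>
    have h0 : KK n (2*0) x.1 y.1 = if x.1 = y.1 then (1:ℝ) else 0 := by
      rw [show 2*0 = 0 from rfl, ← spectral hn 0, pow_zero, Matrix.one_apply]
    rw [pow_zero, Matrix.one_apply, h0]
    by_cases h : x = y
    · rw [if_pos h, if_pos (congrArg Subtype.val h)]
    · rw [if_neg h, if_neg (fun hh => h (Subtype.ext hh))]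
  | succ l ih =>
    rw [pow_succ, Matrix.mul_apply]
    have hQ : ∀ z : {x : V n // p x}, Qgen n p z y = (P1 n * P1 n) z.1 y.1 := by
      intro z
      rw [P1_sq hn]
      unfold Qgen
      by_cases h2 : hammingDist z.1 y.1 = 2
      · rw [if_pos h2, if_pos h2]
      · rw [if_neg h2, if_neg h2]
        by_cases hzy : z = y
        · rw [if_pos hzy, if_pos (congrArg Subtype.val hzy)]
        · rw [if_neg hzy, if_neg (fun hh => hzy (Subtype.ext hh))]
    have hstep : ∀ z : {x : V n // p x}, (Qgen n p ^ l) x z * Qgen n p z y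
        = (P1 n ^ (2*l)) x.1 z.1 * (P1 n * P1 n) z.1 y.1 := by
      intro z; rw [ih x z, hQ z, spectral hn]
    rw [Finset.sum_congr rfl fun z _ => hstep z]
    have hfil : ∀ z : V n, z ∈ univ.filter p ↔ p z := by intro z; simp
    have hsum : (∑ z : {x : V n // p x}, (P1 n ^ (2*l)) x.1 z.1 * (P1 n * P1 n) z.1 y.1)
        = ∑ z : V n, (P1 n ^ (2*l)) x.1 z * (P1 n * P1 n) z y.1 := by
      rw [← Finset.sum_subtype (univ.filter p) hfil
        (fun z => (P1 n ^ (2*l)) x.1 z * (P1 n * P1 n) z y.1)]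
      refine Finset.sum_filter_of_ne fun z _ hz => ?_
      by_contra hpz
      have hodd := hcross z y.1 hpz y.2
      have hd2 : hammingDist z y.1 ≠ 2 := fun h => hodd (by rw [h]; exact ⟨1, rfl⟩)
      have hzy : z ≠ y.1 := fun h => hodd (by rw [h, hammingDist_self]; exact Even.zero)
      have : (P1 n * P1 n) z y.1 = 0 := by rw [P1_sq hn, if_neg hd2, if_neg hzy]
      exact hz (by rw [this, mul_zero])
    rw [hsum]
    have hmm : (∑ z : V n, (P1 n ^ (2*l)) x.1 z * (P1 n * P1 n) z y.1)
        = (P1 n ^ (2*(l+1))) x.1 y.1 := by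
      rw [← Matrix.mul_apply]
      congr 1
      rw [show 2*(l+1) = 2*l + 2 from by ring, pow_add, sq]
    rw [hmm, spectral hn]

lemma KK_bound (hn : 3 ≤ n) (x y : V n) (hxy : Even (hammingDist x y))
    (l : ℕ) (hl : θ n / 2 ≤ l) :
    |KK n (2*l) x y - ((2:ℝ)^(n-1))⁻¹| ≤ ((2:ℝ)^n)⁻¹ * ((2:ℝ)^(n-1))⁻¹ := by
  have hnR : (3:ℝ) ≤ (n:ℝ) := by exact_mod_cast hn
  have hnpos : (0:ℝ) < n := by linarith
  have hne : (n:ℝ) ≠ 0 := hnpos.ne'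
  have hnonempty : Nonempty (Fin n) := ⟨⟨0, by omega⟩⟩
  set r : ℝ := 1 - 2 / (n:ℝ) with hr
  have hr0 : 0 < r := by
    rw [hr]
    have : 2 / (n:ℝ) < 1 := by rw [div_lt_one hnpos]; linarith
    linarith
  have hr1 : r < 1 := by
    rw [hr]
    have : 0 < 2 / (n:ℝ) := by positivity
    linarith
  -- characters have absolute value 1
  have habs : ∀ S : Finset (Fin n), |ee S x y| = 1 := by
    intro S
    unfold ee
    rw [Finset.abs_prod]
    rw [Finset.prod_congr rfl fun i _ => (by by_cases h : x i = y i <;> simp [h] :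
      |if x i = y i then (1:ℝ) else -1| = 1), Finset.prod_const_one]
  have heu : ee univ x y = 1 := by
    unfold ee
    rw [Finset.prod_ite, Finset.prod_const_one, Finset.prod_const, one_mul]
    have hcd : #(univ.filter fun i => ¬ (x i = y i)) = hammingDist x y := (hd_eq x y).symm
    rw [hcd]
    exact Even.neg_one_pow hxy
  have hlu : lam n univ = -1 := by
    unfold lam
    rw [card_univ, Fintype.card_fin, div_eq_iff hne]
    ring
  set F : Finset (Fin n) → ℝ := fun S => lam n S ^ (2*l) * ee S x y with hF
  have hu : (univ : Finset (Fin n)) ∈ (univ : Finset (Finset (Fin n))).erase ∅ :=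
    Finset.mem_erase.mpr ⟨Finset.univ_nonempty.ne_empty, mem_univ _⟩
  set T : ℝ := ∑ S ∈ (((univ : Finset (Finset (Fin n))).erase ∅).erase univ), F S with hT
  have hsplit : (∑ S : Finset (Fin n), F S) = F ∅ + (F univ + T) := by
    rw [← Finset.add_sum_erase _ F (mem_univ ∅)]
    congr 1
    rw [← Finset.add_sum_erase _ F hu]
  have h0 : F ∅ = 1 := by
    show lam n ∅ ^ (2*l) * ee ∅ x y = 1
    have hl0 : lam n ∅ = 1 := by
      unfold lam
      rw [Finset.card_empty]
      push_cast
      rw [mul_zero, sub_zero, div_self hne]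
    have he0 : ee ∅ x y = 1 := by unfold ee; exact Finset.prod_empty
    rw [hl0, he0, one_pow, mul_one]
  have hFu : F univ = 1 := by
    show lam n univ ^ (2*l) * ee univ x y = 1
    rw [hlu, heu, mul_one]
    exact Even.neg_one_pow ⟨l, by ring⟩
  have hpow : (2:ℝ)^n = (2:ℝ)^(n-1) * 2 := by
    rw [← pow_succ]
    congr 1
    omega
  have h2n1 : ((2:ℝ)^(n-1)) ≠ 0 := by positivity
  have hval : KK n (2*l) x y - ((2:ℝ)^(n-1))⁻¹ = ((2:ℝ)^n)⁻¹ * T := by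
    unfold KK
    rw [hsplit, h0, hFu, hpow]
    field_simp
    ring
  -- bound each middle term
  have hterm : ∀ S ∈ (((univ : Finset (Finset (Fin n))).erase ∅).erase univ),
      |F S| ≤ r ^ (2*l) := by
    intro S hS
    obtain ⟨hSu, hS'⟩ := Finset.mem_erase.mp hS
    obtain ⟨hS0, -⟩ := Finset.mem_erase.mp hS'
    have hc1 : 1 ≤ S.card := Finset.card_pos.mpr (Finset.nonempty_iff_ne_empty.mpr hS0)
    have hc2 : S.card ≤ n - 1 := by
      have h1 : S.card ≤ n := by
        simpa [Fintype.card_fin] using Finset.card_le_univ S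
      have h2 : S.card ≠ n := by
        intro hcn
        exact hSu (Finset.card_eq_iff_eq_univ S |>.mp (by rw [hcn, Fintype.card_fin]))
      omega
    have hsR1 : (1:ℝ) ≤ (S.card : ℝ) := by exact_mod_cast hc1
    have hsR2 : (S.card : ℝ) ≤ (n:ℝ) - 1 := by
      have : (S.card : ℝ) ≤ ((n-1 : ℕ) : ℝ) := by exact_mod_cast hc2
      have hcast : ((n-1 : ℕ) : ℝ) = (n:ℝ) - 1 := by
        have : (1:ℕ) ≤ n := by omega
        push_cast [this]
        ring
      linarith [hcast ▸ this]
    have hlam : |lam n S| ≤ r := by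
      unfold lam
      rw [abs_div, abs_of_pos hnpos, div_le_iff₀ hnpos]
      have hrn : r * (n:ℝ) = (n:ℝ) - 2 := by
        rw [hr]
        field_simp
      rw [hrn, abs_le]
      constructor <;> linarith
    calc |F S| = |lam n S| ^ (2*l) * |ee S x y| := by
          rw [hF]
          simp only []
          rw [abs_mul, abs_pow]
      _ ≤ r ^ (2*l) * 1 := by
          refine mul_le_mul (pow_le_pow_left₀ (abs_nonneg _) hlam _) (habs S).le
            (abs_nonneg _) (by positivity)
      _ = r ^ (2*l) := mul_one _
  have hcardT : ((((univ : Finset (Finset (Fin n))).erase ∅).erase univ).card : ℝ)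
      ≤ (2:ℝ)^n := by
    have h1 : (((univ : Finset (Finset (Fin n))).erase ∅).erase univ).card
        ≤ (univ : Finset (Finset (Fin n))).card :=
      le_trans (Finset.card_erase_le) (Finset.card_erase_le)
    have h2 : (univ : Finset (Finset (Fin n))).card = 2^n := by
      rw [Finset.card_univ, Fintype.card_finset, Fintype.card_fin]
    have := h1.trans h2.le
    exact_mod_cast this
  have hTb : |T| ≤ (2:ℝ)^n * r ^ (2*l) := by
    calc |T| ≤ ∑ S ∈ (((univ : Finset (Finset (Fin n))).erase ∅).erase univ), |F S| :=
          Finset.abs_sum_le_sum_abs _ _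
      _ ≤ ∑ S ∈ (((univ : Finset (Finset (Fin n))).erase ∅).erase univ), r ^ (2*l) :=
          Finset.sum_le_sum hterm
      _ = ((((univ : Finset (Finset (Fin n))).erase ∅).erase univ).card : ℝ) * r ^ (2*l) := by
          rw [Finset.sum_const, nsmul_eq_mul]
      _ ≤ (2:ℝ)^n * r ^ (2*l) := by
          have : (0:ℝ) ≤ r ^ (2*l) := by positivity
          exact mul_le_mul_of_nonneg_right hcardT this
  -- analytic bound on r^(2l)
  have hlog2 : (0:ℝ) < Real.log 2 := Real.log_pos (by norm_num)
  have hlogr : Real.log r < 0 := Real.log_neg hr0 hr1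
  have hceil : θ n / 2 = ⌈(3 / 2 : ℝ) * ((n : ℝ) - 1) * Real.log 2
      / |Real.log (1 - 2 / (n : ℝ))|⌉₊ := by
    unfold θ
    omega
  have hcl : (3 / 2 : ℝ) * ((n : ℝ) - 1) * Real.log 2 / |Real.log (1 - 2 / (n : ℝ))| ≤ l := by
    have h1 := Nat.le_ceil ((3 / 2 : ℝ) * ((n : ℝ) - 1) * Real.log 2
      / |Real.log (1 - 2 / (n : ℝ))|)
    have h2 : (⌈(3 / 2 : ℝ) * ((n : ℝ) - 1) * Real.log 2
        / |Real.log (1 - 2 / (n : ℝ))|⌉₊ : ℝ) ≤ (l:ℝ) := by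
      exact_mod_cast (hceil ▸ hl)
    linarith
  have habslog : |Real.log (1 - 2 / (n : ℝ))| = -Real.log r := by
    rw [← hr]
    exact abs_of_neg hlogr
  have hmlr : (0:ℝ) < -Real.log r := by linarith
  have hkey : 3 * ((n:ℝ) - 1) * Real.log 2 ≤ (2*l : ℝ) * (-Real.log r) := by
    rw [habslog] at hcl
    have := (div_le_iff₀ hmlr).mp hcl
    nlinarith
  have hrexp : r ^ (2*l) = Real.exp ((2*l : ℕ) * Real.log r) := by
    rw [Real.exp_nat_mul, Real.exp_log hr0]
  have hm : ((2:ℝ)^n)⁻¹ * ((2:ℝ)^(n-1))⁻¹ = Real.exp (-(((n + (n-1) : ℕ)) : ℝ) * Real.log 2) := by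
    rw [← mul_inv, ← pow_add, neg_mul, Real.exp_neg]
    congr 1
    rw [← Real.exp_log (show (0:ℝ) < 2 by norm_num), ← Real.exp_nat_mul, Real.exp_log
      (show (0:ℝ) < 2 by norm_num)]
  have hfinal : r ^ (2*l) ≤ ((2:ℝ)^n)⁻¹ * ((2:ℝ)^(n-1))⁻¹ := by
    rw [hrexp, hm]
    apply Real.exp_le_exp.mpr
    have hcast : (((n + (n-1) : ℕ)) : ℝ) = 2*(n:ℝ) - 1 := by
      have h1 : (1:ℕ) ≤ n := by omega
      push_cast [h1]
      ring
    rw [hcast]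
    have h3 : (2*(n:ℝ) - 1) * Real.log 2 ≤ 3 * ((n:ℝ) - 1) * Real.log 2 := by
      have : (2*(n:ℝ) - 1) ≤ 3 * ((n:ℝ) - 1) := by linarith
      exact mul_le_mul_of_nonneg_right this hlog2.le
    have h4 : ((2*l : ℕ) : ℝ) * Real.log r = -((2*l : ℝ) * (-Real.log r)) := by
      push_cast
      ring
    rw [h4]
    linarith
  rw [hval, abs_mul, abs_of_pos (by positivity : (0:ℝ) < ((2:ℝ)^n)⁻¹)]
  calc ((2:ℝ)^n)⁻¹ * |T| ≤ ((2:ℝ)^n)⁻¹ * ((2:ℝ)^n * r ^ (2*l)) := by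
        exact mul_le_mul_of_nonneg_left hTb (by positivity)
    _ = r ^ (2*l) := by
        field_simp
    _ ≤ ((2:ℝ)^n)⁻¹ * ((2:ℝ)^(n-1))⁻¹ := hfinal

end EOC

/-- For all large `n`, all `l ≥ θ_n/2` and all `x, y` in `V_n^{ev}`,
`|(Q_n^{ev})^l(x,y) - 2^{-(n-1)}| ≤ 2^{-n} 2^{-(n-1)}`, and likewise for the odd chain. -/
theorem even_odd_chain_mixing : ∃ n₀ : ℕ, ∀ n ≥ n₀, ∀ l : ℕ, θ n / 2 ≤ l →
    (∀ x y : Vev n,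
      |(Qev n ^ l) x y - ((2 : ℝ) ^ (n - 1))⁻¹| ≤ ((2 : ℝ) ^ n)⁻¹ * ((2 : ℝ) ^ (n - 1))⁻¹) ∧
    (∀ x y : Vod n,
      |(Qod n ^ l) x y - ((2 : ℝ) ^ (n - 1))⁻¹| ≤ ((2 : ℝ) ^ n)⁻¹ * ((2 : ℝ) ^ (n - 1))⁻¹) := by
  refine ⟨3, fun n hn l hl => ?_⟩
  have hn0 : 0 < n := by omega
  constructor
  · intro x y
    have hq : Qev n = EOC.Qgen n (fun x : V n => Even (hammingDist x (fun _ => true))) := rfl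
    rw [hq, EOC.Qgen_pow hn0 _ ?hc l x y]
    case hc =>
      intro z w hz hw
      have := EOC.dist_parity z (fun _ => true) w
      rw [hammingDist_comm (fun _ => true) w] at this
      rw [Nat.even_iff] at hz hw ⊢
      omega
    refine EOC.KK_bound hn x.1 y.1 ?_ l hl
    have := EOC.dist_parity x.1 (fun _ => true) y.1
    rw [hammingDist_comm (fun _ => true) y.1] at this
    have hx := x.2; have hy := y.2
    rw [Nat.even_iff] at hx hy ⊢
    omega
  · intro x y
    have hq : Qod n = EOC.Qgen n (fun x : V n => ¬ Even (hammingDist x (fun _ => true))) := rfl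
    rw [hq, EOC.Qgen_pow hn0 _ ?hc l x y]
    case hc =>
      intro z w hz hw
      rw [not_not] at hz
      have := EOC.dist_parity z (fun _ => true) w
      rw [hammingDist_comm (fun _ => true) w] at this
      rw [Nat.even_iff] at hz ⊢
      rw [Nat.even_iff] at hw
      omega
    refine EOC.KK_bound hn x.1 y.1 ?_ l hl
    have := EOC.dist_parity x.1 (fun _ => true) y.1
    rw [hammingDist_comm (fun _ => true) y.1] at this
    have hx := x.2; have hy := y.2
    rw [Nat.even_iff] at hx hy ⊢
    omega
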